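/- For every natural number n ≥ 1 there exists a permutation φ of Fin n × Fin 2 such that the subgroup of the permutation group generated by φ and σ acts transitively on Fin n × Fin 2 and orb(φ) + orb(φ ∘ σ) = n + 2. -/

import Mathlib

/-- The number of orbits (cycles, including fixed points) of a permutation `f`
of a finite type `α`: the number of equivalence classes of the relation
`∃ k : ℤ, (f ^ k) x = y`. -/
noncomputable def orb {α : Type*} [Fintype α] (f : Equiv.Perm α) : ℕ :=
  Nat.card (Quotient (Equiv.Perm.SameCycle.setoid f))

/-- The permutation `σ` of `Fin n × Fin 2` given by `σ (i, j) = (i, j + 1)`. -/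
def sigmaPerm (n : ℕ) : Equiv.Perm (Fin n × Fin 2) :=
  Equiv.prodCongr (Equiv.refl (Fin n)) (Equiv.addRight (1 : Fin 2))

open Fin.NatCast

/-- The permutation `φ (i, j) = (i + j, j)` of `Fin (m+1) × Fin 2`. -/
def phiPerm (m : ℕ) : Equiv.Perm (Fin (m + 1) × Fin 2) where
  toFun p := (p.1 + (p.2.val : Fin (m + 1)), p.2)
  invFun p := (p.1 - (p.2.val : Fin (m + 1)), p.2)
  left_inv p := by simp
  right_inv p := by simp

lemma phi_apply_zero (m : ℕ) (i : Fin (m + 1)) : phiPerm m (i, 0) = (i, 0) := by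
  simp [phiPerm]

lemma phi_apply_one (m : ℕ) (i : Fin (m + 1)) : phiPerm m (i, 1) = (i + 1, 1) := by
  simp [phiPerm]

lemma psi_apply_zero (m : ℕ) (i : Fin (m + 1)) :
    (phiPerm m * sigmaPerm (m + 1)) (i, 0) = (i + 1, 1) := by
  show phiPerm m (sigmaPerm (m + 1) (i, 0)) = (i + 1, 1)
  have : sigmaPerm (m + 1) (i, 0) = (i, 1) := by simp [sigmaPerm]
  rw [this, phi_apply_one]

lemma psi_apply_one (m : ℕ) (i : Fin (m + 1)) :
    (phiPerm m * sigmaPerm (m + 1)) (i, 1) = (i, 0) := by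
  show phiPerm m (sigmaPerm (m + 1) (i, 1)) = (i, 0)
  have : sigmaPerm (m + 1) (i, 1) = (i, 0) := by simp [sigmaPerm]
  rw [this, phi_apply_zero]

/-- Power formula for φ on the 1-component. -/
lemma phi_pow_one (m : ℕ) (i : Fin (m + 1)) (k : ℕ) :
    ((phiPerm m) ^ k) (i, 1) = (i + (k : Fin (m + 1)), 1) := by
  induction k generalizing i with
  | zero => simp
  | succ k ih =>
    rw [pow_succ', Equiv.Perm.mul_apply, ih, phi_apply_one]
    congr 1
    push_cast
    abel

/-- Power formula for ψ = φσ: squares advance the 1-component. -/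
lemma psi_pow_two_mul (m : ℕ) (i : Fin (m + 1)) (k : ℕ) :
    ((phiPerm m * sigmaPerm (m + 1)) ^ (2 * k)) (i, 1) = (i + (k : Fin (m + 1)), 1) := by
  induction k generalizing i with
  | zero => simp
  | succ k ih =>
    have h2 : 2 * (k + 1) = 2 * k + 1 + 1 := by ring
    rw [h2, pow_succ, pow_succ, Equiv.Perm.mul_apply, Equiv.Perm.mul_apply,
      psi_apply_one, psi_apply_zero, ih]
    congr 1
    push_cast
    abel

lemma psi_sameCycle_one (m : ℕ) (i i' : Fin (m + 1)) :
    (phiPerm m * sigmaPerm (m + 1)).SameCycle (i, 1) (i', 1) := by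
  refine ⟨(2 * (i' - i).val : ℕ), ?_⟩
  rw [zpow_natCast, psi_pow_two_mul, Fin.cast_val_eq_self]
  simp

lemma psi_sameCycle (m : ℕ) (x y : Fin (m + 1) × Fin 2) :
    (phiPerm m * sigmaPerm (m + 1)).SameCycle x y := by
  have key : ∀ z : Fin (m + 1) × Fin 2,
      (phiPerm m * sigmaPerm (m + 1)).SameCycle (z.1, 1) z := by
    intro ⟨i, j⟩
    fin_cases j
    · exact ⟨1, by simpa using psi_apply_one m i⟩
    · exact Equiv.Perm.SameCycle.refl _ _
  exact ((key x).symm.trans (psi_sameCycle_one m x.1 y.1)).trans (key y)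

/-- φ preserves the second coordinate under all integer powers. -/
lemma phi_zpow_snd (m : ℕ) (k : ℤ) (x : Fin (m + 1) × Fin 2) :
    (((phiPerm m) ^ k) x).2 = x.2 := by
  have hn : ∀ (l : ℕ) (g : Equiv.Perm (Fin (m + 1) × Fin 2)),
      (∀ z, (g z).2 = z.2) → ∀ z, ((g ^ l) z).2 = z.2 := by
    intro l g hg
    induction l with
    | zero => simp
    | succ l ih => intro z; rw [pow_succ, Equiv.Perm.mul_apply, ih, hg]
  have hphi : ∀ z : Fin (m + 1) × Fin 2, (phiPerm m z).2 = z.2 := fun z => rfl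
  have hphiinv : ∀ z : Fin (m + 1) × Fin 2, ((phiPerm m)⁻¹ z).2 = z.2 := by
    intro z
    conv_rhs => rw [← Equiv.apply_symm_apply (phiPerm m) z]
    rw [hphi]
    rfl
  induction k using Int.rec with
  | ofNat l => simpa using hn l _ hphi x
  | negSucc l =>
    rw [zpow_negSucc]
    have : ((phiPerm m)⁻¹) ^ (l + 1) = ((phiPerm m) ^ (l + 1))⁻¹ := by
      rw [inv_pow]
    rw [← this]
    exact hn (l + 1) _ hphiinv x

lemma phi_classes (m : ℕ) (x y : Fin (m + 1) × Fin 2)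
    (h : (phiPerm m).SameCycle x y) :
    (if x.2 = 0 then some x.1 else (none : Option (Fin (m + 1)))) =
      (if y.2 = 0 then some y.1 else none) := by
  obtain ⟨k, hk⟩ := h
  have hsnd : y.2 = x.2 := by rw [← hk, phi_zpow_snd]
  by_cases hx : x.2 = 0
  · have hx' : x = (x.1, 0) := Prod.ext rfl hx
    have hfix : Function.IsFixedPt (phiPerm m) x := by
      rw [hx']; exact phi_apply_zero m x.1
    have hyx : y = x := by rw [← hk]; exact hfix.perm_zpow k
    rw [hyx]
  · rw [if_neg hx, if_neg (by rw [hsnd]; exact hx)]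

noncomputable def phiQuotEquiv (m : ℕ) :
    Quotient (Equiv.Perm.SameCycle.setoid (phiPerm m)) ≃ Option (Fin (m + 1)) := by
  refine Equiv.ofBijective
    (Quotient.lift (fun x : Fin (m + 1) × Fin 2 =>
      if x.2 = 0 then some x.1 else none) (phi_classes m)) ⟨?_, ?_⟩
  · refine Quotient.ind₂ ?_
    intro ⟨i, j⟩ ⟨i', j'⟩ h
    simp only [Quotient.lift_mk] at h
    apply Quotient.sound
    fin_cases j <;> fin_cases j' <;> simp_all
    · -- both (·, 1): in the n-cycle
      refine ⟨((i' - i).val : ℕ), ?_⟩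
      rw [zpow_natCast, phi_pow_one, Fin.cast_val_eq_self]
      simp
  · intro o
    match o with
    | none => exact ⟨Quotient.mk _ ((0 : Fin (m + 1)), 1), rfl⟩
    | some i => exact ⟨Quotient.mk _ (i, 0), rfl⟩

theorem exists_perm_orb_add_orb_eq (n : ℕ) (hn : 1 ≤ n) :
    ∃ φ : Equiv.Perm (Fin n × Fin 2),
      MulAction.IsPretransitive
        (Subgroup.closure ({φ, sigmaPerm n} : Set (Equiv.Perm (Fin n × Fin 2))))
        (Fin n × Fin 2) ∧
      orb φ + orb (φ * sigmaPerm n) = n + 2 := by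
  obtain ⟨m, rfl⟩ : ∃ m, n = m + 1 := ⟨n - 1, by omega⟩
  refine ⟨phiPerm m, ?_, ?_⟩
  · constructor
    intro x y
    obtain ⟨k, hk⟩ := psi_sameCycle m x y
    have hmem : phiPerm m * sigmaPerm (m + 1) ∈
        Subgroup.closure ({phiPerm m, sigmaPerm (m + 1)} :
          Set (Equiv.Perm (Fin (m + 1) × Fin 2))) :=
      mul_mem (Subgroup.subset_closure (by simp)) (Subgroup.subset_closure (by simp))
    exact ⟨⟨(phiPerm m * sigmaPerm (m + 1)) ^ k, zpow_mem hmem k⟩, hk⟩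
  · have h1 : orb (phiPerm m) = m + 2 := by
      rw [orb, Nat.card_congr (phiQuotEquiv m)]
      simp [Nat.card_eq_fintype_card]
    have h2 : orb (phiPerm m * sigmaPerm (m + 1)) = 1 := by
      rw [orb]
      have : Subsingleton (Quotient
          (Equiv.Perm.SameCycle.setoid (phiPerm m * sigmaPerm (m + 1)))) := by
        constructor
        refine Quotient.ind₂ ?_
        intro a b
        exact Quotient.sound (psi_sameCycle m a b)
      have hne : Nonempty (Quotient
          (Equiv.Perm.SameCycle.setoid (phiPerm m * sigmaPerm (m + 1)))) :=
        ⟨Quotient.mk _ ((0 : Fin (m + 1)), 0)⟩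
      haveI : Unique (Quotient
          (Equiv.Perm.SameCycle.setoid (phiPerm m * sigmaPerm (m + 1)))) :=
        uniqueOfSubsingleton hne.some
      exact Nat.card_unique
    rw [h1, h2]
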